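/- arXiv:1810.02758 — 3 statements merged into one kernel-verified Lean document; each statement's English description precedes it below -/
import Mathlib

section
/- With exponential utility u(x)=β(e^{αx}-1) and dual variables μ_k = 0, λ_{k,k-1} = (Σ_{ℓ≥k} f(v_ℓ))·z_M/(u(v_k)-u(v_k-z_M)), λ_{k,k'} = 0 otherwise, the function Γ_k(z) = f(v_k)z + λ_{k,k-1}·u(v_k - z) − λ_{k+1,k}·u(v_{k+1} - z) satisfies Γ_k(0) = Γ_k(z_M) = f(v_k)·φ_u(k)·z_M, where φ_u is the single-buyer virtual value function. -/
/-- With the dual assignment λ_{k,k-1} = (Σ_{ℓ≥k} f_ℓ)·z_M/(u(v_k)-u(v_k-z_M)),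
the dual constraint function Γ_k satisfies Γ_k(0) = Γ_k(z_M) = f_k·φ_u(k)·z_M. -/
theorem stmt8 (α β zM : ℝ) (hα : 0 < α) (hβ : 0 < β)
    (K : ℕ) (hK : 1 ≤ K) (v f : ℕ → ℝ)
    (hv1 : v 1 = 0) (hvmono : StrictMonoOn v (Set.Icc 1 K)) (hvK : v K < zM)
    (hf : ∀ k ∈ Finset.Icc 1 K, 0 < f k)
    (u : ℝ → ℝ) (hu : u = fun x => β * (Real.exp (α * x) - 1))
    (S : ℕ → ℝ) (hS : ∀ k, S k = ∑ ℓ ∈ Finset.Icc k K, f ℓ)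
    (φ : ℕ → ℝ)
    (hφ : ∀ k, φ k = (1 / f k) * (S k * u (v k) / (u (v k) - u (v k - zM))
        - S (k + 1) * u (v (k + 1)) / (u (v (k + 1)) - u (v (k + 1) - zM))))
    (lam : ℕ → ℝ) (hlam : ∀ k, lam k = S k * zM / (u (v k) - u (v k - zM)))
    (Γ : ℕ → ℝ → ℝ)
    (hΓ : ∀ k z, Γ k z = f k * z + lam k * u (v k - z) - lam (k + 1) * u (v (k + 1) - z)) :
    ∀ k ∈ Finset.Icc 1 K, Γ k 0 = f k * φ k * zM ∧ Γ k zM = f k * φ k * zM := by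
  intro k hk
  rw [Finset.mem_Icc] at hk
  have hfk : f k ≠ 0 := ne_of_gt (hf k (Finset.mem_Icc.mpr hk))
  -- zM > 0
  have hvK0 : 0 ≤ v K := by
    rcases eq_or_lt_of_le hK with h1 | h1
    · rw [← h1, hv1]
    · rw [← hv1]
      exact le_of_lt (hvmono ⟨le_refl 1, hK⟩ ⟨hK, le_refl K⟩ h1)
  have hzM : 0 < zM := lt_of_le_of_lt hvK0 hvK
  -- denominators positive
  have hD : ∀ x : ℝ, 0 < u x - u (x - zM) := by
    intro x
    subst hu
    simp only
    have h1 : Real.exp (α * (x - zM)) < Real.exp (α * x) :=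
      Real.exp_lt_exp.mpr (by nlinarith)
    nlinarith
  have hDk : u (v k) - u (v k - zM) ≠ 0 := ne_of_gt (hD _)
  have hDk1 : u (v (k + 1)) - u (v (k + 1) - zM) ≠ 0 := ne_of_gt (hD _)
  -- sum split
  have hSsplit : S k = f k + S (k + 1) := by
    rw [hS, hS, ← Finset.Ioc_insert_left hk.2, Finset.sum_insert (by simp),
      Finset.Icc_add_one_left_eq_Ioc]
  have hlamD : ∀ j, lam j * (u (v j) - u (v j - zM)) ≠ 0 →
      lam j * u (v j - zM) = lam j * u (v j) - S j * zM := by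
    intro j hj
    rw [hlam] at hj ⊢
    have hDj : u (v j) - u (v j - zM) ≠ 0 := by
      intro h; rw [h] at hj; simp [h] at hj
    field_simp
    ring
  have hΓ0 : Γ k 0 = f k * φ k * zM := by
    rw [hΓ, hφ, hlam, hlam]
    field_simp
    ring
  refine ⟨hΓ0, ?_⟩
  have hlk : lam k * u (v k - zM) = lam k * u (v k) - S k * zM := by
    rw [hlam]; field_simp; ring
  have hlk1 : lam (k + 1) * u (v (k + 1) - zM) = lam (k + 1) * u (v (k + 1)) - S (k + 1) * zM := by
    rw [hlam]; field_simp; ring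
  have : Γ k zM = Γ k 0 := by
    rw [hΓ, hΓ, hlk, hlk1]
    simp only [sub_zero]
    nlinarith [hSsplit]
  rw [this, hΓ0]
end

section
/- If the single-buyer virtual value function φ_u is monotone increasing (regularity), then Σ_k max{0, f(v_k)·φ_u(k)·z_M} = max_{k∈[K]} [(Σ_{ℓ≥k} f(v_ℓ))·z_M·u(v_k)/(u(v_k)-u(v_k-z_M))], i.e., the sum of positive parts of the cumulative virtual values equals the optimal take-it-or-leave-it revenue. -/
private lemma tele (G : ℕ → ℝ) (a : ℕ) : ∀ b, a ≤ b →
    ∑ ℓ ∈ Finset.Icc a b, (G ℓ - G (ℓ + 1)) = G a - G (b + 1) := by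
  intro b
  induction b with
  | zero => intro h; interval_cases a; simp
  | succ n ih =>
    intro h
    rcases Nat.lt_or_ge a (n + 1) with h' | h'
    · rw [Finset.sum_Icc_succ_top (by omega), ih (by omega)]; ring
    · have : a = n + 1 := by omega
      subst this; simp

private lemma key (K : ℕ) (hK : 1 ≤ K) (d R : ℕ → ℝ)
    (hR : ∀ k ∈ Finset.Icc 1 K, R k = ∑ ℓ ∈ Finset.Icc k K, d ℓ)
    (hR1 : R 1 = 0)
    (hsign : ∀ a ∈ Finset.Icc 1 K, ∀ b ∈ Finset.Icc 1 K, a ≤ b → 0 ≤ d a → 0 ≤ d b) :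
    ∑ k ∈ Finset.Icc 1 K, max 0 (d k)
      = (Finset.Icc 1 K).sup' (Finset.nonempty_Icc.mpr hK) R := by
  apply le_antisymm
  · -- LHS ≤ RHS
    by_cases hex : ∃ k ∈ Finset.Icc 1 K, 0 ≤ d k
    · set T := (Finset.Icc 1 K).filter (fun k => 0 ≤ d k) with hT
      have hTne : T.Nonempty := by
        obtain ⟨k, hk, hdk⟩ := hex
        exact ⟨k, Finset.mem_filter.mpr ⟨hk, hdk⟩⟩
      set k₀ := T.min' hTne with hk₀
      have hk₀mem : k₀ ∈ T := T.min'_mem hTne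
      have hk₀Icc : k₀ ∈ Finset.Icc 1 K := (Finset.mem_filter.mp hk₀mem).1
      have hk₀d : 0 ≤ d k₀ := (Finset.mem_filter.mp hk₀mem).2
      have hsum : ∑ k ∈ Finset.Icc 1 K, max 0 (d k)
          = ∑ k ∈ Finset.Icc k₀ K, max 0 (d k) := by
        refine (Finset.sum_subset ?_ ?_).symm
        · intro x hx
          simp only [Finset.mem_Icc] at hx ⊢
          exact ⟨le_trans (Finset.mem_Icc.mp hk₀Icc).1 hx.1, hx.2⟩
        · intro x hx hx'
          have hxlt : x < k₀ := by
            simp only [Finset.mem_Icc] at hx hx'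
            omega
          have : d x < 0 := by
            by_contra hc
            push_neg at hc
            have : x ∈ T := Finset.mem_filter.mpr ⟨hx, hc⟩
            exact absurd (T.min'_le x this) (by omega)
          simp [le_of_lt this]
      have hsum2 : ∑ k ∈ Finset.Icc k₀ K, max 0 (d k)
          = ∑ k ∈ Finset.Icc k₀ K, d k := by
        apply Finset.sum_congr rfl
        intro x hx
        have hxIcc : x ∈ Finset.Icc 1 K := by
          simp only [Finset.mem_Icc] at hx ⊢
          exact ⟨le_trans (Finset.mem_Icc.mp hk₀Icc).1 hx.1, hx.2⟩
        have : 0 ≤ d x := hsign k₀ hk₀Icc x hxIcc (Finset.mem_Icc.mp hx).1 hk₀d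
        simp [this]
      rw [hsum, hsum2, ← hR k₀ hk₀Icc]
      exact Finset.le_sup' R hk₀Icc
    · push_neg at hex
      have : ∑ k ∈ Finset.Icc 1 K, max 0 (d k) = 0 := by
        apply Finset.sum_eq_zero
        intro x hx
        simp [le_of_lt (hex x hx)]
      rw [this, ← hR1]
      exact Finset.le_sup' R (Finset.mem_Icc.mpr ⟨le_refl 1, hK⟩)
  · -- RHS ≤ LHS
    apply Finset.sup'_le
    intro k hk
    rw [hR k hk]
    calc ∑ ℓ ∈ Finset.Icc k K, d ℓ ≤ ∑ ℓ ∈ Finset.Icc k K, max 0 (d ℓ) :=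
          Finset.sum_le_sum (fun i _ => le_max_right 0 (d i))
      _ ≤ ∑ ℓ ∈ Finset.Icc 1 K, max 0 (d ℓ) := by
          apply Finset.sum_le_sum_of_subset_of_nonneg
          · intro x hx
            simp only [Finset.mem_Icc] at hx hk ⊢
            omega
          · intro i _ _
            exact le_max_left 0 (d i)

/-- Under regularity (strictly increasing virtual value), the sum of the positive
parts of the virtual values equals the optimal randomized take-it-or-leave-it
revenue max_k (Σ_{ℓ≥k} f_ℓ)·z_M·u(v_k)/(u(v_k)-u(v_k-z_M)). -/
theorem stmt10 (α β zM : ℝ) (hα : 0 < α) (hβ : 0 < β)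
    (K : ℕ) (hK : 1 ≤ K) (v f : ℕ → ℝ)
    (hv1 : v 1 = 0) (hvmono : StrictMonoOn v (Set.Icc 1 K)) (hvK : v K < zM)
    (hf : ∀ k ∈ Finset.Icc 1 K, 0 < f k)
    (u : ℝ → ℝ) (hu : u = fun x => β * (Real.exp (α * x) - 1))
    (S : ℕ → ℝ) (hS : ∀ k, S k = ∑ ℓ ∈ Finset.Icc k K, f ℓ)
    (φ : ℕ → ℝ)
    (hφ : ∀ k, φ k = (1 / f k) * (S k * u (v k) / (u (v k) - u (v k - zM))
        - S (k + 1) * u (v (k + 1)) / (u (v (k + 1)) - u (v (k + 1) - zM))))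
    (hreg : StrictMonoOn φ (Set.Icc 1 K)) :
    ∑ k ∈ Finset.Icc 1 K, max 0 (f k * φ k * zM)
      = (Finset.Icc 1 K).sup' (Finset.nonempty_Icc.mpr hK)
          (fun k => S k * zM * u (v k) / (u (v k) - u (v k - zM))) := by
  have hzM : 0 < zM := by
    have h1 : v 1 ≤ v K := hvmono.monotoneOn (Set.mem_Icc.mpr ⟨le_refl 1, hK⟩)
      (Set.mem_Icc.mpr ⟨hK, le_refl K⟩) hK
    linarith [hv1 ▸ h1]
  set G : ℕ → ℝ := fun k => S k * u (v k) / (u (v k) - u (v k - zM)) with hG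
  set R : ℕ → ℝ := fun k => S k * zM * u (v k) / (u (v k) - u (v k - zM)) with hRdef
  set d : ℕ → ℝ := fun k => f k * φ k * zM with hd
  have hGK1 : G (K + 1) = 0 := by
    have : S (K + 1) = 0 := by
      rw [hS]
      rw [Finset.Icc_eq_empty (by omega)]
      simp
    simp [hG, this]
  have hdiff : ∀ k ∈ Finset.Icc 1 K, d k = (G k - G (k + 1)) * zM := by
    intro k hk
    have hfk : f k ≠ 0 := ne_of_gt (hf k hk)
    simp only [hd, hφ k, hG]
    field_simp
  have hRG : ∀ k, R k = G k * zM := by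
    intro k
    simp only [hRdef, hG]
    ring
  have hR : ∀ k ∈ Finset.Icc 1 K, R k = ∑ ℓ ∈ Finset.Icc k K, d ℓ := by
    intro k hk
    obtain ⟨hk1, hkK⟩ := Finset.mem_Icc.mp hk
    have : ∑ ℓ ∈ Finset.Icc k K, d ℓ = ∑ ℓ ∈ Finset.Icc k K, (G ℓ - G (ℓ + 1)) * zM := by
      apply Finset.sum_congr rfl
      intro x hx
      apply hdiff
      simp only [Finset.mem_Icc] at hx ⊢
      omega
    rw [this, ← Finset.sum_mul, tele G k K hkK, hGK1, hRG]
    ring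
  have hR1 : R 1 = 0 := by
    have hu1 : u (v 1) = 0 := by rw [hv1, hu]; simp
    simp [hRdef, hu1]
  have hsign : ∀ a ∈ Finset.Icc 1 K, ∀ b ∈ Finset.Icc 1 K, a ≤ b → 0 ≤ d a → 0 ≤ d b := by
    intro a ha b hb hab hda
    have hfa := hf a ha
    have hfb := hf b hb
    have hda' : 0 ≤ f a * φ a * zM := hda
    have hφa : 0 ≤ φ a := by nlinarith [mul_pos hfa hzM]
    have hφb : 0 ≤ φ b := by
      rcases eq_or_lt_of_le hab with h | h
      · subst h; exact hφa
      · have := hreg (by simpa [Set.mem_Icc] using Finset.mem_Icc.mp ha)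
          (by simpa [Set.mem_Icc] using Finset.mem_Icc.mp hb) h
        linarith
    simp only [hd]
    positivity
  exact key K hK d R hR hR1 hsign
end

section
/- For exponential utility u(x)=β(e^{αx}-1), the derivative of U_k(v) = x(k)·e^{αv}·β + constant with respect to v is α·x(k)·β·e^{αv}; hence if x(k) ≥ x(k') then U_k − U_{k'} is nondecreasing in v. Combined with single-crossing (U_k(v_{crossing}) = U_{k'}(v_{crossing}) at adjacent indices), this implies the loser-pay auction utility curves satisfy: for k' < k, U_k(v) ≥ U_{k'}(v) for all v ≥ v_k. -/
/-- For exponential utility, the derivative of U_k in v is α·x(k)·β·e^{αv}; hence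
if x(k') ≤ x(k) then U_k − U_{k'} is nondecreasing, and together with the
single-crossing conditions U_k(v_k) = U_{k-1}(v_k) this yields
U_{k'}(w) ≤ U_k(w) for all k' < k and w ≥ v_k (BIC from below). -/
theorem stmt16 (α β zM : ℝ) (hα : 0 < α) (hβ : 0 < β)
    (u : ℝ → ℝ) (hu : u = fun t => β * (Real.exp (α * t) - 1))
    (x q v : ℕ → ℝ) (hxmono : Monotone x) (hx0 : ∀ k, 0 ≤ x k)
    (hvmono : StrictMono v)
    (U : ℕ → ℝ → ℝ)
    (hU : ∀ k w, U k w = x k * u w + (1 - x k) * q k * u (-zM))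
    (hcross : ∀ k, 1 ≤ k → U k (v k) = U (k - 1) (v k)) :
    (∀ k t, HasDerivAt (fun w => U k w) (α * x k * β * Real.exp (α * t)) t)
    ∧ (∀ k k', x k' ≤ x k → Monotone (fun w => U k w - U k' w))
    ∧ (∀ k k', k' < k → ∀ w, v k ≤ w → U k' w ≤ U k w) := by
  subst hu
  have hderiv : ∀ k t, HasDerivAt (fun w => U k w)
      (α * x k * β * Real.exp (α * t)) t := by
    intro k t
    have h1 : HasDerivAt (fun w : ℝ => α * w) α t := by
      simpa using (hasDerivAt_id t).const_mul α
    have h2 : HasDerivAt (fun w : ℝ => Real.exp (α * w))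
        (Real.exp (α * t) * α) t := h1.exp
    have h3 : HasDerivAt (fun w : ℝ => x k * (β * (Real.exp (α * w) - 1))
        + (1 - x k) * q k * (β * (Real.exp (α * (-zM)) - 1)))
        (α * x k * β * Real.exp (α * t)) t := by
      have := (((h2.sub_const 1).const_mul β).const_mul (x k)).add_const
        ((1 - x k) * q k * (β * (Real.exp (α * (-zM)) - 1)))
      rw [show α * x k * β * Real.exp (α * t) = x k * (β * (Real.exp (α * t) * α)) by ring]
      exact this
    have hfun : (fun w => U k w) = fun w : ℝ =>
        x k * (β * (Real.exp (α * w) - 1))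
        + (1 - x k) * q k * (β * (Real.exp (α * (-zM)) - 1)) := by
      funext w; simp [hU]
    rw [hfun]; exact h3
  have hmono : ∀ k k', x k' ≤ x k → Monotone (fun w => U k w - U k' w) := by
    intro k k' hx a b hab
    simp only [hU]
    have hexp : Real.exp (α * a) ≤ Real.exp (α * b) :=
      Real.exp_le_exp.mpr (mul_le_mul_of_nonneg_left hab hα.le)
    nlinarith [mul_le_mul_of_nonneg_right
      (mul_le_mul_of_nonneg_left hexp hβ.le) (sub_nonneg.mpr hx)]
  refine ⟨hderiv, hmono, ?_⟩
  intro k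
  induction k with
  | zero => intro k' hk'; exact absurd hk' (Nat.not_lt_zero k')
  | succ n ih =>
    intro k' hk' w hw
    have hstep : U n w ≤ U (n + 1) w := by
      have hc : U (n + 1) (v (n + 1)) = U n (v (n + 1)) := by
        simpa using hcross (n + 1) (Nat.le_add_left 1 n)
      have := hmono (n + 1) n (hxmono (Nat.le_succ n)) hw
      simp only at this
      linarith
    rcases Nat.lt_succ_iff_lt_or_eq.mp hk' with h | h
    · have hvw : v n ≤ w := le_trans (hvmono (Nat.lt_succ_self n)).le hw
      exact le_trans (ih k' h w hvw) hstep
    · rw [h]; exact hstep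
end
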